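/- If n is even, then for every nonempty subset S of X there exists a profile u such that the top cycle at u is exactly S. -/

import Mathlib

open Finset

/-- The simple majority voting relation `x ≽_u y`:
`|{i : x ≻_{u(i)} y}| ≥ |{i : y ≻_{u(i)} x}|`.  A profile assigns to each
individual `i` a rank equivalence `u i : Fin m ≃ Fin m` (lower rank = better),
so `i` prefers `x` to `y` iff `(u i) x < (u i) y`. -/
def majGE {m n : ℕ} (u : Fin n → (Fin m ≃ Fin m)) (x y : Fin m) : Prop :=
  (univ.filter (fun i : Fin n => (u i) y < (u i) x)).card ≤
    (univ.filter (fun i : Fin n => (u i) x < (u i) y)).card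

/-- The top cycle `G_T(u)`: the set of alternatives that reach every
alternative via the transitive closure `R(u)` of the majority relation. -/
def topCycle {m n : ℕ} (u : Fin n → (Fin m ≃ Fin m)) : Set (Fin m) :=
  {x : Fin m | ∀ y : Fin m, Relation.TransGen (majGE u) x y}

lemma card_filter_lt_half (k : ℕ) :
    (univ.filter fun i : Fin (k+k) => (i:ℕ) < k).card = k := by
  rw [show (univ.filter fun i : Fin (k+k) => (i:ℕ) < k) =
      Finset.map ⟨fun j : Fin k => Fin.castAdd k j, Fin.castAdd_injective _ _⟩ univ by
    ext i; simp [Fin.ext_iff]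
    constructor
    · intro h; exact ⟨⟨i, h⟩, rfl⟩
    · rintro ⟨a, ha⟩; omega]
  simp

lemma card_filter_not_lt_half (k : ℕ) :
    (univ.filter fun i : Fin (k+k) => ¬ (i:ℕ) < k).card = k := by
  rw [Finset.filter_not, Finset.card_sdiff_of_subset (filter_subset _ _), card_filter_lt_half]
  simp


/-- If `n` is even, every nonempty subset of `X` is in the range of the top
cycle correspondence. -/
theorem topCycle_range_even (m n : ℕ) (hm : 3 ≤ m) (hn : 2 ≤ n) (hne : Even n)
    (S : Finset (Fin m)) (hS : S.Nonempty) :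
    ∃ u : Fin n → (Fin m ≃ Fin m), topCycle u = (S : Set (Fin m)) := by
  classical
  obtain ⟨k, hk⟩ := hne
  subst hk
  have hk1 : 1 ≤ k := by omega
  set s := S.card with hs
  have hsm : s ≤ m := by simpa using S.card_le_univ
  have hadd : s + (m - s) = m := by omega
  -- the block equivalence
  have hc : Sᶜ.card = m - s := by simp [Finset.card_compl, hs]
  let eS : {x // x ∈ S} ≃ Fin s := S.equivFin
  let eT : {x // x ∈ Sᶜ} ≃ Fin (m - s) := (Sᶜ).equivFin.trans (finCongr hc)
  let e' : {x : Fin m // ¬ x ∈ S} ≃ {x // x ∈ Sᶜ} :=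
    Equiv.subtypeEquivRight (fun x => (Finset.mem_compl).symm)
  let F : Fin m ≃ (Fin s ⊕ Fin (m - s)) :=
    (Equiv.sumCompl (· ∈ S)).symm.trans (Equiv.sumCongr eS (e'.trans eT))
  have hFin : ∀ x ∈ S, ∃ a, F x = Sum.inl a := by
    intro x hx
    refine ⟨eS ⟨x, hx⟩, ?_⟩
    simp [F, Equiv.sumCompl_symm_apply_of_pos (p := (· ∈ S)) hx]
  have hFout : ∀ x ∉ S, ∃ b, F x = Sum.inr b := by
    intro x hx
    refine ⟨(e'.trans eT) ⟨x, hx⟩, ?_⟩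
    simp [F, Equiv.sumCompl_symm_apply_of_neg (p := (· ∈ S)) hx]
  have hFS : ∀ x a, F x = Sum.inl a → x ∈ S := by
    intro x a ha
    by_contra hx
    obtain ⟨b, hb⟩ := hFout x hx
    rw [ha] at hb; exact absurd hb (by simp)
  let G : (Fin s ⊕ Fin (m - s)) ≃ Fin m := finSumFinEquiv.trans (finCongr hadd)
  have hGl : ∀ a : Fin s, ((G (Sum.inl a)) : ℕ) = a := by intro a; simp [G]
  have hGr : ∀ b : Fin (m - s), ((G (Sum.inr b)) : ℕ) = s + b := by intro b; simp [G]
  let R : (Fin s ⊕ Fin (m-s)) ≃ (Fin s ⊕ Fin (m-s)) :=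
    Equiv.sumCongr Fin.revPerm Fin.revPerm
  let u : Fin (k+k) → (Fin m ≃ Fin m) := fun i =>
    if (i:ℕ) < k then F.trans G else F.trans (R.trans G)
  have hu : ∀ (i : Fin (k+k)) (z : Fin m),
      u i z = if (i:ℕ) < k then G (F z) else G (R (F z)) := by
    intro i z
    by_cases h : (i:ℕ) < k <;> simp [u, h]
  -- comparisons within S
  have key : ∀ (x y : Fin m) (a b : Fin s), F x = Sum.inl a → F y = Sum.inl b → a ≠ b →
      (univ.filter fun i : Fin (k+k) => u i x < u i y).card = k := by
    intro x y a b hx hy hab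
    have hcond : ∀ i : Fin (k+k), (u i x < u i y) ↔
        (if (i:ℕ) < k then a < b else b < a) := by
      intro i
      rw [hu, hu, hx, hy]
      by_cases h : (i:ℕ) < k
      · simp only [h, if_true]
        rw [Fin.lt_def, hGl, hGl, Fin.lt_def]
      · simp only [h, if_false]
        have : R (Sum.inl a) = Sum.inl a.rev := by simp [R]
        have hb' : R (Sum.inl b) = Sum.inl b.rev := by simp [R]
        rw [this, hb', Fin.lt_def, hGl, hGl, ← Fin.lt_def, Fin.rev_lt_rev]
    rcases lt_or_gt_of_ne hab with h | h
    · rw [show (univ.filter fun i : Fin (k+k) => u i x < u i y) =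
          (univ.filter fun i : Fin (k+k) => (i:ℕ) < k) by
        ext i; simp only [mem_filter, mem_univ, true_and, hcond]
        by_cases hi : (i:ℕ) < k <;> simp [hi, h, asymm h]]
      exact card_filter_lt_half k
    · rw [show (univ.filter fun i : Fin (k+k) => u i x < u i y) =
          (univ.filter fun i : Fin (k+k) => ¬ (i:ℕ) < k) by
        ext i; simp only [mem_filter, mem_univ, true_and, hcond]
        by_cases hi : (i:ℕ) < k <;> simp [hi, h, asymm h]]
      exact card_filter_not_lt_half k
  -- cross comparisons
  have cross : ∀ (x y : Fin m) (a : Fin s) (b : Fin (m-s)),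
      F x = Sum.inl a → F y = Sum.inr b → ∀ i : Fin (k+k), u i x < u i y := by
    intro x y a b hx hy i
    rw [hu, hu, hx, hy]
    by_cases h : (i:ℕ) < k
    · simp only [h, if_true]
      rw [Fin.lt_def, hGl, hGr]
      have := a.isLt; omega
    · simp only [h, if_false]
      have h1 : R (Sum.inl a) = Sum.inl a.rev := by simp [R]
      have h2 : R (Sum.inr b) = Sum.inr b.rev := by simp [R]
      rw [h1, h2, Fin.lt_def, hGl, hGr]
      have := a.rev.isLt; omega
  -- majority facts
  have majS : ∀ x ∈ S, ∀ y, majGE u x y := by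
    intro x hx y
    obtain ⟨a, ha⟩ := hFin x hx
    by_cases hxy : x = y
    · subst hxy; unfold majGE; exact le_refl _
    by_cases hy : y ∈ S
    · obtain ⟨b, hb⟩ := hFin y hy
      have hab : a ≠ b := by
        intro h; apply hxy; apply F.injective; rw [ha, hb, h]
      unfold majGE
      rw [key x y a b ha hb hab, key y x b a hb ha hab.symm]
    · obtain ⟨b, hb⟩ := hFout y hy
      unfold majGE
      have : (univ.filter fun i : Fin (k+k) => u i y < u i x) = ∅ := by
        ext i; simp only [mem_filter, mem_univ, true_and, Finset.notMem_empty, iff_false]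
        exact asymm (cross x y a b ha hb i)
      rw [this]; simp
  have notmaj : ∀ x ∉ S, ∀ y ∈ S, ¬ majGE u x y := by
    intro x hx y hy
    obtain ⟨b, hb⟩ := hFout x hx
    obtain ⟨a, ha⟩ := hFin y hy
    unfold majGE
    have h1 : (univ.filter fun i : Fin (k+k) => u i x < u i y) = ∅ := by
      ext i; simp only [mem_filter, mem_univ, true_and, Finset.notMem_empty, iff_false]
      exact asymm (cross y x a b ha hb i)
    have h2 : (univ.filter fun i : Fin (k+k) => u i y < u i x) = univ := by
      ext i; simp only [mem_filter, mem_univ, true_and, iff_true]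
      exact cross y x a b ha hb i
    rw [h1, h2]
    simp only [Finset.card_empty, Finset.card_univ, Fintype.card_fin]
    omega
  refine ⟨u, ?_⟩
  ext x
  constructor
  · intro hx
    obtain ⟨s0, hs0⟩ := hS
    have hreach : Relation.TransGen (majGE u) x s0 := hx s0
    simp only [Finset.coe_mem, Finset.mem_coe]
    have claim : ∀ b, Relation.TransGen (majGE u) x b → b ∈ S → x ∈ S := by
      intro b hb
      induction hb with
      | single h =>
        intro hbS
        by_contra hxS
        exact notmaj x hxS _ hbS h
      | tail h1 h2 ih =>
        intro hbS
        apply ih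
        by_contra hcS
        exact notmaj _ hcS _ hbS h2
    exact claim s0 hreach hs0
  · intro hx y
    exact Relation.TransGen.single (majS x hx y)
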